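/- Let f be a nonidentity permutation of the finite set X = {1,...,n} (n ≥ 3) which is not an n-cycle. Then there exists a nontrivial partition P of X such that f ∈ S(X,P). -/

import Mathlib

/-- `f` sends each block of the partition `P` into some block of `P`. -/
def PreservesPart {α : Type*} (P : Set (Set α)) (f : α → α) : Prop :=
  ∀ b ∈ P, ∃ b' ∈ P, f '' b ⊆ b'

/-- A permutation `f` belongs to `S(X,P)`, the group of units of `T(X,P)`:
both `f` and `f⁻¹` send each block into some block. -/
def InSPart {α : Type*} (P : Set (Set α)) (f : Equiv.Perm α) : Prop :=
  PreservesPart P f ∧ PreservesPart P f.symm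

/-- A partition is nontrivial: it has a non-singleton block and more than one block. -/
def NontrivialPart {α : Type*} (P : Set (Set α)) : Prop :=
  (∃ b ∈ P, ∀ x : α, b ≠ {x}) ∧ ∃ b ∈ P, ∃ b' ∈ P, b ≠ b'

/-- `f` is an `n`-cycle on `Fin n`: a cycle moving every point. -/
def IsFullCycle {n : ℕ} (f : Equiv.Perm (Fin n)) : Prop :=
  f.IsCycle ∧ f.support = Finset.univ

theorem stmt7 {n : ℕ} (hn : 3 ≤ n) (f : Equiv.Perm (Fin n))
    (hne : f ≠ 1) (hnc : ¬ IsFullCycle f) :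
    ∃ P : Set (Set (Fin n)), Setoid.IsPartition P ∧ NontrivialPart P ∧ InSPart P f := by
  classical
  set s : Setoid (Fin n) :=
    ⟨f.SameCycle, ⟨fun x => Equiv.Perm.SameCycle.refl f x,
      fun h => h.symm, fun h h' => h.trans h'⟩⟩ with hs
  refine ⟨s.classes, Setoid.isPartition_classes s, ?_, ?_, ?_⟩
  · -- nontrivial
    obtain ⟨x, hx⟩ : ∃ x, f x ≠ x := by
      by_contra h
      push_neg at h
      exact hne (Equiv.Perm.ext fun y => h y)
    constructor
    · refine ⟨{z | s.r z x}, Setoid.mem_classes s x, fun y hy => ?_⟩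
      have hx1 : x ∈ {z | s.r z x} := s.refl' x
      have hx2 : f x ∈ {z | s.r z x} := by
        show f.SameCycle (f x) x
        exact (Equiv.Perm.sameCycle_apply_left (f := f)).mpr (Equiv.Perm.SameCycle.refl f x)
      rw [hy] at hx1 hx2
      exact hx (hx2.trans hx1.symm)
    · -- two distinct classes
      rcases not_and_or.mp hnc with hcyc | hsupp
      · -- not a cycle: get y moved with ¬ SameCycle f x y
        rw [Equiv.Perm.IsCycle] at hcyc
        push_neg at hcyc
        obtain ⟨y, hy, hnsc⟩ := hcyc x hx
        refine ⟨{z | s.r z x}, Setoid.mem_classes s x,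
          {z | s.r z y}, Setoid.mem_classes s y, fun h => ?_⟩
        have : x ∈ {z | s.r z y} := h ▸ s.refl' x
        exact hnsc this
      · -- fixed point exists
        have : ∃ a, f a = a := by
          by_contra h
          push_neg at h
          apply hsupp
          ext a
          simp [Equiv.Perm.mem_support, h a]
        obtain ⟨a, ha⟩ := this
        refine ⟨{z | s.r z x}, Setoid.mem_classes s x,
          {z | s.r z a}, Setoid.mem_classes s a, fun h => ?_⟩
        have hax : f.SameCycle x a := by
          have hx1 : x ∈ {z | s.r z x} := s.refl' x
          rw [h] at hx1; exact hx1
        obtain ⟨k, hk⟩ := hax.symm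
        rw [Equiv.Perm.zpow_apply_eq_self_of_apply_eq_self ha] at hk
        exact hx (hk ▸ ha)
  · -- InSPart, f direction
    rintro b ⟨y, rfl⟩
    refine ⟨{z | s.r z y}, Setoid.mem_classes s y, ?_⟩
    rintro _ ⟨z, hz, rfl⟩
    exact (Equiv.Perm.sameCycle_apply_left (f := f)).mpr hz
  · rintro b ⟨y, rfl⟩
    refine ⟨{z | s.r z y}, Setoid.mem_classes s y, ?_⟩
    rintro _ ⟨z, hz, rfl⟩
    show f.SameCycle (f⁻¹ z) y
    exact (Equiv.Perm.sameCycle_symm_apply_left (f := f)).mpr hz
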